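/- As z → 0 in ℂ ∖ (−∞,0], one has d₁(z) = e^{−βπi}·(1 + 2iβ·z^{1/2} − 2β²·z − (2i(β + 2β³)/3)·z^{3/2} + O(z²)) and d₂(z) = e^{βπi}·(1 − 2iβ·z^{1/2} − 2β²·z + (2i(β + 2β³)/3)·z^{3/2} + O(z²)), where z^{1/2} and z^{3/2} are principal branches. -/

import Mathlib

open Complex Filter Topology Set Asymptotics

/-- `β = ln(1-γ)/(2πi)`. -/
noncomputable def beta (γ : ℝ) : ℂ := Complex.log (1 - γ) / (2 * Real.pi * Complex.I)

/-- `λ(ζ) = ((ζ-i)/(ζ+i))^β`, principal branch. -/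
noncomputable def lam (γ : ℝ) (ζ : ℂ) : ℂ := ((ζ - Complex.I) / (ζ + Complex.I)) ^ (beta γ)

/-- `d₁(z) = λ(z^{1/2})`, principal branch of the square root. -/
noncomputable def d1 (γ : ℝ) (z : ℂ) : ℂ := lam γ (z ^ ((1 : ℂ)/2))

/-- `d₂(z) = λ(-z^{1/2})`, principal branch of the square root. -/
noncomputable def d2 (γ : ℝ) (z : ℂ) : ℂ := lam γ (-(z ^ ((1 : ℂ)/2)))


lemma logTaylor_four (x : ℂ) : Complex.logTaylor 4 x = x - x^2/2 + x^3/3 := by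
  simp [Complex.logTaylor, Finset.sum_range_succ]
  ring

lemma logO : (fun x : ℂ => Complex.log (1 + x) - (x - x^2/2 + x^3/3)) =O[𝓝 (0:ℂ)]
    (fun x => x^4) := by
  apply IsBigO.of_bound 1
  filter_upwards [Metric.ball_mem_nhds (0:ℂ) (by norm_num : (0:ℝ) < 1/2)] with x hx
  rw [Metric.mem_ball, dist_zero_right] at hx
  have h1 : ‖x‖ < 1 := hx.trans (by norm_num)
  have h2 := Complex.norm_log_sub_logTaylor_le 3 h1
  rw [logTaylor_four] at h2
  norm_num at h2
  have h3 : (1 - ‖x‖)⁻¹ ≤ 2 := by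
    rw [inv_le_comm₀ (by linarith) (by norm_num)]; linarith
  rw [one_mul, norm_pow]
  nlinarith [mul_le_mul_of_nonneg_left h3
    (pow_nonneg (norm_nonneg x) 4),
    pow_nonneg (norm_nonneg x) 4]

lemma expO : (fun x : ℂ => Complex.exp x - (1 + x + x^2/2 + x^3/6)) =O[𝓝 (0:ℂ)]
    (fun x => x^4) := by
  apply IsBigO.of_bound 1
  filter_upwards [Metric.ball_mem_nhds (0:ℂ) one_pos] with x hx
  rw [Metric.mem_ball, dist_zero_right] at hx
  have h2 := Complex.exp_bound (x := x) (by simpa using hx.le) (by norm_num : 0 < 4)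
  have h3 : ∑ m ∈ Finset.range 4, x ^ m / m.factorial = 1 + x + x^2/2 + x^3/6 := by
    simp [Finset.sum_range_succ, Nat.factorial]
  rw [h3] at h2
  norm_num [Nat.factorial] at h2
  rw [one_mul, norm_pow]
  have hb : ‖x‖ ^ 4 * (5 / 96) ≤ ‖x‖ ^ 4 * 1 := by
    gcongr <;> norm_num
  calc ‖Complex.exp x - (1 + x + x^2/2 + x^3/6)‖ ≤ ‖x‖ ^ 4 * (5 / 96) := h2
    _ ≤ ‖x‖^4 := by rw [mul_one] at hb; exact_mod_cast hb

lemma expsub1O : (fun x : ℂ => Complex.exp x - 1) =O[𝓝 (0:ℂ)] (fun x => x) := by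
  apply IsBigO.of_bound 2
  filter_upwards [Metric.ball_mem_nhds (0:ℂ) one_pos] with x hx
  rw [Metric.mem_ball, dist_zero_right] at hx
  exact Complex.norm_exp_sub_one_le (by simpa using hx.le)


lemma mulO (f g : ℂ → ℂ) {c : ℂ} (hg : Filter.Tendsto g (𝓝 (0:ℂ)) (𝓝 c)) :
    (fun w => f w * g w) =O[𝓝 (0:ℂ)] f :=
  ((isBigO_refl f (𝓝 0)).mul (hg.isBigO_one ℂ)).congr (fun _ => rfl) (fun _ => mul_one _)

lemma ratId (t : ℂ) (ht : (1:ℂ) - t ≠ 0) :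
    (2*t/(1-t) - (2*t/(1-t))^2/2 + (2*t/(1-t))^3/3) - (2*t + 2/3*t^3)
      = t^4 * ((12 - 6*t + 2*t^2)/3 * ((1-t)⁻¹)^3) := by
  have hinv : (1-t) * (1-t)⁻¹ = 1 := mul_inv_cancel₀ ht
  linear_combination ((2*t + (2/3)*t^3) + (-2*t^2 + (2/3)*t^3 - (2/3)*t^4)*(1-t)⁻¹
    + ((8/3)*t^3 - (4/3)*t^4 + (2/3)*t^5)*((1-t)⁻¹)^2) * hinv

lemma coreO (b : ℂ) :
    (fun w : ℂ => Complex.exp (b * Complex.log ((1 + Complex.I*w)/(1 - Complex.I*w))) -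
      (1 + 2*Complex.I*b*w - 2*b^2*w^2 - (2*Complex.I*(b + 2*b^3)/3)*w^3))
      =O[𝓝 (0:ℂ)] (fun w => w^4) := by
  set L : ℂ → ℂ := fun w => Complex.log ((1 + Complex.I*w)/(1 - Complex.I*w)) with hLdef
  set v : ℂ → ℂ := fun w => 2*Complex.I*w/(1 - Complex.I*w) with hvdef
  set Q0 : ℂ → ℂ := fun w => 2*Complex.I*w - 2*Complex.I/3*w^3 with hQ0def
  set Q : ℂ → ℂ := fun w => b * Q0 w with hQdef
  set A : ℂ → ℂ := fun w => b * (L w - Q0 w) with hAdef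
  have hball : ∀ᶠ w : ℂ in 𝓝 0, ‖w‖ < 1/2 := by
    filter_upwards [Metric.ball_mem_nhds (0:ℂ) (by norm_num : (0:ℝ) < 1/2)] with w hw
    rwa [Metric.mem_ball, dist_zero_right] at hw
  have hden : ∀ w : ℂ, ‖w‖ < 1/2 → (1:ℂ) - Complex.I*w ≠ 0 := by
    intro w hw h
    have h1 : ‖(1:ℂ)‖ ≤ ‖Complex.I*w‖ := by
      rw [show (Complex.I*w) = 1 - (1 - Complex.I*w) from by ring, h, sub_zero]
    rw [norm_mul, Complex.norm_I, one_mul, norm_one] at h1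
    linarith
  have hvO : v =O[𝓝 (0:ℂ)] (fun w => w) := by
    apply IsBigO.of_bound 4
    filter_upwards [hball] with w hw
    have h1 : (1:ℝ)/2 ≤ ‖1 - Complex.I*w‖ := by
      have h2 := norm_sub_norm_le (1:ℂ) (Complex.I*w)
      rw [norm_mul, Complex.norm_I, one_mul, norm_one] at h2
      linarith
    rw [hvdef]
    simp only []
    rw [norm_div, div_le_iff₀ (by linarith)]
    have h2 : ‖2*Complex.I*w‖ = 2*‖w‖ := by
      rw [norm_mul, norm_mul, Complex.norm_I, mul_one]
      norm_num
    rw [h2]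
    nlinarith [norm_nonneg w]
  have hvt : Tendsto v (𝓝 (0:ℂ)) (𝓝 0) := hvO.trans_tendsto tendsto_id
  have hlog1 : (fun w => Complex.log (1 + v w) - (v w - (v w)^2/2 + (v w)^3/3))
      =O[𝓝 (0:ℂ)] (fun w => w^4) := by
    have := (logO.comp_tendsto hvt).trans (hvO.pow 4)
    simpa [Function.comp_def] using this
  have hI4 : Complex.I^4 = 1 := by
    rw [show (4:ℕ) = 2*2 from rfl, pow_mul, Complex.I_sq]; norm_num
  have hlog2 : (fun w => (v w - (v w)^2/2 + (v w)^3/3) - Q0 w) =O[𝓝 (0:ℂ)]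
      (fun w => w^4) := by
    have hc : ContinuousAt (fun w : ℂ =>
        (12 - 6*(Complex.I*w) + 2*(Complex.I*w)^2)/3 * ((1-(Complex.I*w))⁻¹)^3) 0 := by
      apply ContinuousAt.mul
      · fun_prop
      · apply ContinuousAt.pow
        apply ContinuousAt.inv₀
        · fun_prop
        · norm_num
    have hO := mulO (fun w : ℂ => w^4) _ hc.tendsto
    apply hO.congr' _ EventuallyEq.rfl
    filter_upwards [hball] with w hw
    have h0 : (1:ℂ) - Complex.I*w ≠ 0 := hden w hw
    have h1 : v w = 2*(Complex.I*w)/(1-(Complex.I*w)) := by rw [hvdef]; ring_nf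
    have h2 : Q0 w = 2*(Complex.I*w) + 2/3*(Complex.I*w)^3 := by
      rw [hQ0def]
      linear_combination (-(2/3) * Complex.I * w^3) * Complex.I_sq
    rw [h1, h2, ratId (Complex.I*w) h0,
      show ((Complex.I*w)^4 : ℂ) = w^4 from by rw [mul_pow, hI4, one_mul]]
  have hlogO : (fun w => L w - Q0 w) =O[𝓝 (0:ℂ)] (fun w => w^4) := by
    apply (hlog1.add hlog2).congr' _ EventuallyEq.rfl
    filter_upwards [hball] with w hw
    have h0 := hden w hw
    have hu : (1 + Complex.I*w)/(1 - Complex.I*w) = 1 + v w := by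
      rw [hvdef]; field_simp; ring
    rw [hLdef]; simp only []
    rw [hu]; ring
  have hA : A =O[𝓝 (0:ℂ)] (fun w => w^4) := hlogO.const_mul_left b
  have hw4t : Tendsto (fun w : ℂ => w^4) (𝓝 0) (𝓝 0) := by
    have := (continuous_pow 4 (M := ℂ)).tendsto 0
    simpa using this
  have hAt : Tendsto A (𝓝 (0:ℂ)) (𝓝 0) := hA.trans_tendsto hw4t
  have hQt : Tendsto Q (𝓝 (0:ℂ)) (𝓝 0) := by
    have hc : Continuous Q := by rw [hQdef, hQ0def]; fun_prop
    have := hc.tendsto 0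
    simpa [hQdef, hQ0def] using this
  have hQO : Q =O[𝓝 (0:ℂ)] (fun w => w) := by
    have hc : Continuous (fun w : ℂ => b*(2*Complex.I - 2*Complex.I/3*w^2)) := by fun_prop
    exact (mulO (fun w : ℂ => w) _ (hc.tendsto 0)).congr
      (fun w => by rw [hQdef, hQ0def]; ring) (fun _ => rfl)
  have hterm1 : (fun w => Complex.exp (Q w) * (Complex.exp (A w) - 1)) =O[𝓝 (0:ℂ)]
      (fun w => w^4) := by
    have h1 : (fun w => Complex.exp (Q w)) =O[𝓝 (0:ℂ)] (fun _ => (1:ℂ)) :=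
      ((Complex.continuous_exp.tendsto 0).comp hQt).isBigO_one ℂ
    have h2 : (fun w => Complex.exp (A w) - 1) =O[𝓝 (0:ℂ)] (fun w => w^4) := by
      have := (expsub1O.comp_tendsto hAt).trans hA
      simpa [Function.comp_def] using this
    exact (h1.mul h2).congr (fun _ => rfl) (fun w => one_mul _)
  have hterm2 : (fun w => Complex.exp (Q w) - (1 + Q w + (Q w)^2/2 + (Q w)^3/6)) =O[𝓝 (0:ℂ)]
      (fun w => w^4) := by
    have := (expO.comp_tendsto hQt).trans (hQO.pow 4)
    simpa [Function.comp_def] using this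
  have hterm3 : (fun w => (1 + Q w + (Q w)^2/2 + (Q w)^3/6) -
      (1 + 2*Complex.I*b*w - 2*b^2*w^2 - (2*Complex.I*(b + 2*b^3)/3)*w^3)) =O[𝓝 (0:ℂ)]
      (fun w => w^4) := by
    have hc : Continuous (fun w : ℂ => (4:ℂ)/3*b^2 + 4/3*Complex.I*b^3*w - 2/9*b^2*w^2
        - 4/9*Complex.I*b^3*w^3 + 4/81*Complex.I*b^3*w^5) := by fun_prop
    apply (mulO (fun w : ℂ => w^4) _ (hc.tendsto 0)).congr _ (fun _ => rfl)
    intro w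
    rw [hQdef, hQ0def]
    linear_combination (-((2:ℂ)*w^2*b^2 + (4/3)*w^3*Complex.I*b^3 + (-4/3)*w^4*b^2
      + (-4/3)*w^5*Complex.I*b^3 + (2/9)*w^6*b^2 + (4/9)*w^7*Complex.I*b^3
      + (-4/81)*w^9*Complex.I*b^3)) * Complex.I_sq
  refine ((hterm1.add hterm2).add hterm3).congr (fun w => ?_) (fun _ => rfl)
  have key : Complex.exp (Q w) * Complex.exp (A w) = Complex.exp (b * L w) := by
    rw [← Complex.exp_add]; congr 1; rw [hQdef, hAdef]; ring
  rw [mul_sub, key, mul_one]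
  ring


lemma log_neg_of_im_pos {v : ℂ} (h : 0 < v.im) :
    Complex.log (-v) = Complex.log v - Real.pi * Complex.I := by
  have hv : v ≠ 0 := fun h0 => by simp [h0] at h
  have harg1 : 0 < Complex.arg v := by
    rcases lt_or_eq_of_le (Complex.arg_nonneg_iff.mpr h.le) with h1 | h1
    · exact h1
    · exact absurd (Complex.arg_eq_zero_iff.mp h1.symm).2 h.ne'
  have harg2 : Complex.arg v ≤ Real.pi := Complex.arg_le_pi v
  have him : (Complex.log v - Real.pi * Complex.I).im = Complex.arg v - Real.pi := by
    simp [Complex.sub_im, Complex.mul_im, Complex.log_im]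
  have hexp : Complex.exp (Complex.log v - Real.pi * Complex.I) = -v := by
    rw [sub_eq_add_neg, Complex.exp_add, Complex.exp_log hv, Complex.exp_neg,
      Complex.exp_pi_mul_I]
    rw [inv_neg, inv_one, mul_neg, mul_one]
  rw [← hexp, Complex.log_exp] <;> rw [him]
  · linarith [Real.pi_pos]
  · linarith [Real.pi_pos]

lemma log_neg_of_im_neg {v : ℂ} (h : v.im < 0) :
    Complex.log (-v) = Complex.log v + Real.pi * Complex.I := by
  have hv : v ≠ 0 := fun h0 => by simp [h0] at h
  have harg1 : Complex.arg v < 0 := Complex.arg_neg_iff.mpr h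
  have harg2 : -Real.pi < Complex.arg v := Complex.neg_pi_lt_arg v
  have him : (Complex.log v + Real.pi * Complex.I).im = Complex.arg v + Real.pi := by
    simp [Complex.add_im, Complex.mul_im, Complex.log_im]
  have hexp : Complex.exp (Complex.log v + Real.pi * Complex.I) = -v := by
    rw [Complex.exp_add, Complex.exp_log hv, Complex.exp_pi_mul_I]
    simp
  rw [← hexp, Complex.log_exp] <;> rw [him]
  · linarith [Real.pi_pos]
  · linarith [Real.pi_pos]

lemma lam_eq (γ : ℝ) {w : ℂ} (hw : 0 < w.re) :
    lam γ w = Complex.exp (-(beta γ) * Real.pi * Complex.I) *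
      Complex.exp (beta γ * Complex.log ((1 + Complex.I*w)/(1 - Complex.I*w))) := by
  have hden : (1:ℂ) - Complex.I*w ≠ 0 := by
    intro h
    have := congrArg Complex.im h
    simp at this
    linarith
  have hwI : w + Complex.I ≠ 0 := by
    intro h
    have := congrArg Complex.re h
    simp at this
    linarith
  set u : ℂ := (1 + Complex.I*w)/(1 - Complex.I*w) with hu
  have hns : 0 < Complex.normSq (1 - Complex.I*w) := Complex.normSq_pos.mpr hden
  have him : 0 < u.im := by
    rw [hu, Complex.div_im]
    have h1 : (1 + Complex.I*w).im = w.re := by simp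
    have h2 : (1 + Complex.I*w).re = 1 - w.im := by simp; ring
    have h3 : (1 - Complex.I*w).re = 1 + w.im := by simp
    have h4 : (1 - Complex.I*w).im = -w.re := by simp
    rw [h1, h2, h3, h4]
    have : w.re * (1 + w.im) / Complex.normSq (1 - Complex.I * w) -
        (1 - w.im) * -w.re / Complex.normSq (1 - Complex.I * w)
        = 2 * w.re / Complex.normSq (1 - Complex.I * w) := by
      field_simp
      ring
    rw [this]
    positivity
  have hu0 : u ≠ 0 := fun h => by simp [h] at him
  have hratio : (w - Complex.I)/(w + Complex.I) = -u := by
    rw [hu, ← neg_div, div_eq_div_iff hwI hden]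
    linear_combination (2*w) * Complex.I_sq
  rw [lam, hratio, Complex.cpow_def_of_ne_zero (neg_ne_zero.mpr hu0),
    log_neg_of_im_pos him,
    show (Complex.log u - Real.pi * Complex.I) * beta γ
      = -(beta γ) * Real.pi * Complex.I + beta γ * Complex.log u from by ring,
    Complex.exp_add]

lemma lam_neg_eq (γ : ℝ) {w : ℂ} (hw : 0 < w.re) :
    lam γ (-w) = Complex.exp ((beta γ) * Real.pi * Complex.I) *
      Complex.exp (beta γ * Complex.log ((1 - Complex.I*w)/(1 + Complex.I*w))) := by
  have hden : (1:ℂ) + Complex.I*w ≠ 0 := by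
    intro h
    have := congrArg Complex.im h
    simp at this
    linarith
  have hwI : -w + Complex.I ≠ 0 := by
    intro h
    have := congrArg Complex.re h
    simp at this
    linarith
  set u : ℂ := (1 - Complex.I*w)/(1 + Complex.I*w) with hu
  have hns : 0 < Complex.normSq (1 + Complex.I*w) := Complex.normSq_pos.mpr hden
  have him : u.im < 0 := by
    rw [hu, Complex.div_im]
    have h1 : (1 - Complex.I*w).im = -w.re := by simp
    have h2 : (1 - Complex.I*w).re = 1 + w.im := by simp
    have h3 : (1 + Complex.I*w).re = 1 - w.im := by simp; ring
    have h4 : (1 + Complex.I*w).im = w.re := by simp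
    rw [h1, h2, h3, h4]
    have : -w.re * (1 - w.im) / Complex.normSq (1 + Complex.I * w) -
        (1 + w.im) * w.re / Complex.normSq (1 + Complex.I * w)
        = -(2 * w.re) / Complex.normSq (1 + Complex.I * w) := by
      field_simp
      ring
    rw [this]
    rw [div_neg_iff]
    right
    exact ⟨by linarith, hns⟩
  have hu0 : u ≠ 0 := fun h => by simp [h] at him
  have hratio : (-w - Complex.I)/(-w + Complex.I) = -u := by
    rw [hu, ← neg_div, div_eq_div_iff hwI hden]
    linear_combination (-2*w) * Complex.I_sq
  rw [lam, hratio, Complex.cpow_def_of_ne_zero (neg_ne_zero.mpr hu0),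
    log_neg_of_im_neg him,
    show (Complex.log u + Real.pi * Complex.I) * beta γ
      = (beta γ) * Real.pi * Complex.I + beta γ * Complex.log u from by ring,
    Complex.exp_add]


lemma coreO' (b : ℂ) :
    (fun w : ℂ => Complex.exp (b * Complex.log ((1 - Complex.I*w)/(1 + Complex.I*w))) -
      (1 - 2*Complex.I*b*w - 2*b^2*w^2 + (2*Complex.I*(b + 2*b^3)/3)*w^3))
      =O[𝓝 (0:ℂ)] (fun w => w^4) := by
  have hneg : Tendsto (fun w : ℂ => -w) (𝓝 (0:ℂ)) (𝓝 0) := by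
    simpa using (continuous_neg (G := ℂ)).tendsto 0
  have h := (coreO b).comp_tendsto hneg
  apply h.congr (fun w => ?_) (fun w => by simp only [Function.comp_apply]; ring)
  simp only [Function.comp_apply]
  have e1 : (1 + Complex.I*(-w))/(1 - Complex.I*(-w)) = (1 - Complex.I*w)/(1 + Complex.I*w) := by
    ring_nf
  rw [e1]; ring

lemma re_sq_pos {z : ℂ} (hz : z ∈ Complex.slitPlane) : 0 < (z ^ ((1:ℂ)/2)).re := by
  have hz0 : z ≠ 0 := Complex.slitPlane_ne_zero hz
  rw [Complex.cpow_def_of_ne_zero hz0, Complex.exp_re]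
  apply mul_pos (Real.exp_pos _)
  have him : (Complex.log z * (1/2)).im = Complex.arg z / 2 := by
    simp [Complex.mul_im, Complex.log_im]
    ring
  rw [him]
  apply Real.cos_pos_of_mem_Ioo
  constructor
  · have := Complex.neg_pi_lt_arg z
    linarith
  · have h1 : Complex.arg z < Real.pi :=
      lt_of_le_of_ne (Complex.arg_le_pi z) (Complex.slitPlane_arg_ne_pi hz)
    linarith

theorem gap_tacnode_d1_d2_asymptotics_at_zero (γ : ℝ) (hγ : γ ∈ Set.Ioo (0:ℝ) 1) :
    (fun z : ℂ => d1 γ z -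
        Complex.exp (-(beta γ) * Real.pi * Complex.I) *
          (1 + 2 * Complex.I * beta γ * z ^ ((1:ℂ)/2) - 2 * (beta γ)^2 * z
            - (2 * Complex.I * (beta γ + 2 * (beta γ)^3) / 3) * z ^ ((3:ℂ)/2)))
      =O[𝓝[{z : ℂ | ¬(z.re ≤ 0 ∧ z.im = 0)}] (0:ℂ)] (fun z : ℂ => z^2) ∧
    (fun z : ℂ => d2 γ z -
        Complex.exp ((beta γ) * Real.pi * Complex.I) *
          (1 - 2 * Complex.I * beta γ * z ^ ((1:ℂ)/2) - 2 * (beta γ)^2 * z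
            + (2 * Complex.I * (beta γ + 2 * (beta γ)^3) / 3) * z ^ ((3:ℂ)/2)))
      =O[𝓝[{z : ℂ | ¬(z.re ≤ 0 ∧ z.im = 0)}] (0:ℂ)] (fun z : ℂ => z^2) := by
  set S : Set ℂ := {z : ℂ | ¬(z.re ≤ 0 ∧ z.im = 0)} with hSdef
  have hmem : ∀ z ∈ S, z ∈ Complex.slitPlane := by
    intro z hz
    rw [Complex.mem_slitPlane_iff]
    rw [hSdef, Set.mem_setOf_eq, not_and_or, not_le] at hz
    exact hz
  have hz0 : ∀ z ∈ S, z ≠ 0 := fun z hz => Complex.slitPlane_ne_zero (hmem z hz)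
  have hre : ∀ z ∈ S, 0 < (z ^ ((1:ℂ)/2)).re := fun z hz => re_sq_pos (hmem z hz)
  have htend0 : Tendsto (fun z : ℂ => z ^ ((1:ℂ)/2)) (𝓝[S] 0) (𝓝 0) := by
    rw [tendsto_zero_iff_norm_tendsto_zero]
    have hbd : ∀ z : ℂ, ‖z ^ ((1:ℂ)/2)‖ ≤ ‖z‖ ^ ((1:ℝ)/2) := by
      intro z
      have h := Complex.norm_cpow_le z ((1:ℂ)/2)
      have h1 : ((1:ℂ)/2).re = (1:ℝ)/2 := by norm_num
      have h2 : ((1:ℂ)/2).im = 0 := by norm_num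
      rw [h1, h2, mul_zero, Real.exp_zero, div_one] at h
      exact h
    apply squeeze_zero (fun z => norm_nonneg _) hbd
    have h1 : Tendsto (fun z : ℂ => ‖z‖) (𝓝[S] 0) (𝓝 0) := by
      have := (continuous_norm (E := ℂ)).tendsto 0
      simp only [norm_zero] at this
      exact this.mono_left nhdsWithin_le_nhds
    have h2 : ContinuousAt (fun x : ℝ => x ^ ((1:ℝ)/2)) 0 :=
      Real.continuousAt_rpow_const 0 _ (Or.inr (by norm_num))
    have h3 := h2.tendsto.comp h1
    rw [Real.zero_rpow (by norm_num : (1:ℝ)/2 ≠ 0)] at h3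
    exact h3
  have htendW : Tendsto (fun z : ℂ => z ^ ((1:ℂ)/2)) (𝓝[S] 0) (𝓝[{w : ℂ | 0 < w.re}] 0) := by
    rw [tendsto_nhdsWithin_iff]
    refine ⟨htend0, ?_⟩
    filter_upwards [self_mem_nhdsWithin] with z hz
    exact hre z hz
  have hsq : ∀ z ∈ S, (z ^ ((1:ℂ)/2))^2 = z := by
    intro z hz
    rw [sq, ← Complex.cpow_add _ _ (hz0 z hz)]
    norm_num
  have hsq3 : ∀ z ∈ S, (z ^ ((1:ℂ)/2))^3 = z ^ ((3:ℂ)/2) := by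
    intro z hz
    rw [pow_succ, hsq z hz,
      show ((3:ℂ)/2) = 1 + 1/2 from by norm_num,
      Complex.cpow_add _ _ (hz0 z hz), Complex.cpow_one]
  have hg : ∀ᶠ z in 𝓝[S] (0:ℂ),
      ((fun w : ℂ => w^4) ∘ (fun z : ℂ => z ^ ((1:ℂ)/2))) z = z^2 := by
    filter_upwards [self_mem_nhdsWithin] with z hz
    simp only [Function.comp_apply]
    rw [show (4:ℕ) = 2*2 from rfl, pow_mul, hsq z hz]
  constructor
  · have hO1 := (((coreO (beta γ)).mono nhdsWithin_le_nhds).comp_tendsto htendW).const_mul_left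
      (Complex.exp (-(beta γ) * Real.pi * Complex.I))
    apply hO1.congr' ?_ hg
    filter_upwards [self_mem_nhdsWithin] with z hz
    simp only [Function.comp_apply]
    rw [mul_sub, ← lam_eq γ (hre z hz), hsq z hz, hsq3 z hz]
    rfl
  · have hO2 := (((coreO' (beta γ)).mono nhdsWithin_le_nhds).comp_tendsto htendW).const_mul_left
      (Complex.exp ((beta γ) * Real.pi * Complex.I))
    apply hO2.congr' ?_ hg
    filter_upwards [self_mem_nhdsWithin] with z hz
    simp only [Function.comp_apply]
    rw [mul_sub, ← lam_neg_eq γ (hre z hz), hsq z hz, hsq3 z hz]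
    rfl
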